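/- Let R be a subring of a ring Q, and let I ⊆ J be ideals of R with J invertible with respect to Q. Then I = J · (J^{-1}I), where J^{-1}I = {x ∈ R : Jx ⊆ I}. -/

import Mathlib

open Pointwise

variable {Q : Type*} [Ring Q] (R : Subring Q)

/-- A left ideal `I` is two-sided if it is also closed under right multiplication. -/
def IsTwoSided (I : Ideal R) : Prop := ∀ x ∈ I, ∀ r : R, x * r ∈ I

/-- The underlying subset of `Q` of an ideal of the subring `R`. -/
def idealSet (I : Ideal R) : Set Q := (↑) '' (I : Set R)

/-- An ideal `J` of `R` is invertible with respect to `Q` if there is an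
`(R,R)`-subbimodule `J* ⊆ Q` with `J·J* = J*·J = R`, the products being the additive
subgroups of `Q` generated by the respective sets of products. -/
def QInvertible (J : Ideal R) : Prop :=
  ∃ Jstar : AddSubgroup Q,
    (∀ r ∈ R, ∀ x ∈ Jstar, r * x ∈ Jstar ∧ x * r ∈ Jstar) ∧
    (AddSubgroup.closure (idealSet R J * (Jstar : Set Q)) : Set Q) = (R : Set Q) ∧
    (AddSubgroup.closure ((Jstar : Set Q) * idealSet R J) : Set Q) = (R : Set Q)

/-- For a two-sided ideal `J` and an ideal `I`, the ideal `J⁻¹I = {x : R | Jx ⊆ I}`. -/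
def lquot (J I : Ideal R) (hJ : IsTwoSided R J) : Ideal R where
  carrier := {x : R | ∀ j ∈ J, j * x ∈ I}
  add_mem' := by
    intro x y hx hy j hj
    rw [mul_add]
    exact I.add_mem (hx j hj) (hy j hj)
  zero_mem' := by
    intro j hj
    simpa using I.zero_mem
  smul_mem' := by
    intro c x hx j hj
    rw [smul_eq_mul, ← mul_assoc]
    exact hx (j * c) (hJ j hj c)

/-- If `R` is a subring of `Q` and `I ⊆ J` are (two-sided) ideals
of `R` with `J` invertible with respect to `Q`, then `I = J·(J⁻¹I)`. -/
theorem invertible_factorization (I J : Ideal R) (hI : IsTwoSided R I)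
    (hJ : IsTwoSided R J) (hIJ : I ≤ J) (hinv : QInvertible R J) :
    I = J * lquot R J I hJ := by
  obtain ⟨Js, hmod, hJJs, hJsJ⟩ := hinv
  set L := lquot R J I hJ with hL
  apply le_antisymm
  · -- I ≤ J * L
    intro a ha
    set M : AddSubgroup Q :=
      AddSubgroup.map R.subtype.toAddMonoidHom (J * L).toAddSubgroup with hM
    have key : ∀ x ∈ AddSubgroup.closure (idealSet R J * (Js : Set Q)),
        x * (a : Q) ∈ M := by
      intro x hx
      induction hx using AddSubgroup.closure_induction with
      | mem x hx =>
        obtain ⟨t, ht, s, hs, rfl⟩ := hx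
        obtain ⟨j, hjJ, rfl⟩ := ht
        -- s * a lies in R
        have hsa : s * (a : Q) ∈ (R : Set Q) := by
          rw [← hJsJ]
          exact AddSubgroup.subset_closure (Set.mul_mem_mul hs ⟨a, hIJ ha, rfl⟩)
        refine ⟨j * ⟨s * (a : Q), hsa⟩, Ideal.mul_mem_mul hjJ ?_, by
          simp [mul_assoc]⟩
        -- show ⟨s*a, _⟩ ∈ L
        intro j' hj'
        have hjs : (j' : Q) * s ∈ (R : Set Q) := by
          rw [← hJJs]
          exact AddSubgroup.subset_closure (Set.mul_mem_mul ⟨j', hj', rfl⟩ hs)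
        have heq : j' * (⟨s * (a : Q), hsa⟩ : R) = (⟨(j' : Q) * s, hjs⟩ : R) * a :=
          Subtype.ext (by simp [mul_assoc])
        rw [heq]
        exact Ideal.mul_mem_left I _ ha
      | zero => simpa using M.zero_mem
      | add x y hx hy ihx ihy =>
        rw [add_mul]; exact M.add_mem ihx ihy
      | neg x hx ihx =>
        rw [neg_mul]; exact M.neg_mem ihx
    have h1 : (1 : Q) ∈ AddSubgroup.closure (idealSet R J * (Js : Set Q)) := by
      have : (1 : Q) ∈ (R : Set Q) := R.one_mem
      rwa [← hJJs] at this
    have := key 1 h1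
    rw [one_mul] at this
    obtain ⟨b, hb, hba⟩ := this
    have : b = a := Subtype.ext hba
    rwa [← this]
  · -- J * L ≤ I
    rw [Ideal.mul_le]
    intro j hjJ x hx
    exact hx j hjJ
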